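/- For any AF Γ and C ⊆ A, every admissible set of Γ contained in C extends to a complete extension of Γ in C, hence preferred extensions of Γ in C (maximal complete extensions in C) exist. -/

import Mathlib

variable {α : Type*}

def conflictFree (att : α → α → Prop) (T : Set α) : Prop :=
  ∀ a ∈ T, ∀ b ∈ T, ¬ att a b

def acceptable (att : α → α → Prop) (T : Set α) (a : α) : Prop :=
  ∀ b, att b a → ∃ c ∈ T, att c b

def admissible (att : α → α → Prop) (T : Set α) : Prop :=
  conflictFree att T ∧ ∀ a ∈ T, acceptable att T a

/-- admissible set of Γ in C -/
def admissibleInC (att : α → α → Prop) (C E : Set α) : Prop :=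
  admissible att E ∧ E ⊆ C

/-- complete extension of Γ in C -/
def completeInC (att : α → α → Prop) (C E : Set α) : Prop :=
  admissibleInC att C E ∧ ∀ a ∈ C, acceptable att E a → a ∈ E

/-- preferred extension of Γ in C -/
def preferredInC (att : α → α → Prop) (C E : Set α) : Prop :=
  completeInC att C E ∧ ∀ U, completeInC att C U → E ⊆ U → U = E

lemma acceptable_mono {att : α → α → Prop} {T T' : Set α} (h : T ⊆ T') {a : α}
    (ha : acceptable att T a) : acceptable att T' a :=
  fun b hb => let ⟨c, hc, hcb⟩ := ha b hb; ⟨c, h hc, hcb⟩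

/-- Dung's fundamental lemma -/
lemma admissible_insert {att : α → α → Prop} {T : Set α} {a : α}
    (hT : admissible att T) (ha : acceptable att T a) :
    admissible att (insert a T) := by
  obtain ⟨hcf, hdef⟩ := hT
  constructor
  · rintro b (rfl | hb) c (rfl | hc) hatt
    · obtain ⟨d, hd, hdb⟩ := ha _ hatt
      obtain ⟨e, he, hed⟩ := ha _ hdb
      exact hcf e he d hd hed
    · obtain ⟨d, hd, hda⟩ := hdef c hc _ hatt
      obtain ⟨e, he, hed⟩ := ha d hda
      exact hcf e he d hd hed
    · obtain ⟨d, hd, hdb⟩ := ha _ hatt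
      exact hcf d hd b hb hdb
    · exact hcf b hb c hc hatt
  · rintro b (rfl | hb)
    · exact acceptable_mono (Set.subset_insert _ T) ha
    · exact acceptable_mono (Set.subset_insert _ T) (hdef b hb)

theorem admissibleInC_extends [Fintype α] (att : α → α → Prop) (C E : Set α)
    (hE : admissibleInC att C E) :
    (∃ T : Set α, completeInC att C T ∧ E ⊆ T) ∧
    ∃ P : Set α, preferredInC att C P := by
  have key : ∀ S : Set (Set α), S.Nonempty → ∃ M ∈ S, ∀ U ∈ S, M ⊆ U → U = M := by
    intro S hne
    obtain ⟨M, hM, hmax⟩ := Set.Finite.exists_maximalFor id S (Set.toFinite S) hne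
    exact ⟨M, hM, fun U hU hMU => le_antisymm (hmax hU hMU) hMU⟩
  obtain ⟨T, ⟨hTadm, hTE⟩, hTmax⟩ :=
    key {T | admissibleInC att C T ∧ E ⊆ T} ⟨E, hE, subset_rfl⟩
  have hTcomp : completeInC att C T := by
    refine ⟨hTadm, fun a haC hacc => ?_⟩
    have : insert a T = T := by
      refine hTmax (insert a T) ⟨⟨admissible_insert hTadm.1 hacc,
        Set.insert_subset haC hTadm.2⟩, hTE.trans (Set.subset_insert _ T)⟩
        (Set.subset_insert _ T)
    rw [← this]; exact Set.mem_insert a T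
  refine ⟨⟨T, hTcomp, hTE⟩, ?_⟩
  obtain ⟨P, hP, hPmax⟩ := key {U | completeInC att C U} ⟨T, hTcomp⟩
  exact ⟨P, hP, fun U hU hPU => hPmax U hU hPU⟩
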